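/- On a path under strict preferences, there is a reachable assignment σ with σ(k) = o_1 and σ(k-1) = o_{n'} in the full instance on agents 1,...,n if and only if there is such a reachable assignment in the instance restricted to agents 1,...,n' and objects o_1,...,o_{n'}. -/

import Mathlib

/-- An assignment maps agents to objects bijectively (agents and objects are both `Fin n`;
object `o_i` is identified with index `i`, agent `i` initially holds `o_i`). -/
abbrev Assignment (n : ℕ) := Equiv.Perm (Fin n)

/-- `u j o` is agent `j`'s utility for object `o`; strict linear preferences mean each `u j`
is injective, and `o ≻_j o'` iff `u j o > u j o'`. -/
def StrictPref {n : ℕ} (u : Fin n → Fin n → ℕ) : Prop := ∀ j, Function.Injective (u j)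

/-- A rational swap under strict preferences: two adjacent agents exchange objects, each
strictly preferring the object received. -/
def SwapStep {n : ℕ} (adj : Fin n → Fin n → Prop) (u : Fin n → Fin n → ℕ)
    (σ σ' : Assignment n) : Prop :=
  ∃ a b : Fin n, adj a b ∧ u a (σ b) > u a (σ a) ∧ u b (σ a) > u b (σ b) ∧
    σ' = σ * Equiv.swap a b

/-- `σseq 0, σseq 1, …, σseq t` is a sequence of swaps. -/
def SwapSeq {n : ℕ} (adj : Fin n → Fin n → Prop) (u : Fin n → Fin n → ℕ)
    (σseq : ℕ → Assignment n) (t : ℕ) : Prop :=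
  ∀ m < t, SwapStep adj u (σseq m) (σseq (m + 1))

/-- Adjacency of the path `0 – 1 – ⋯ – (n-1)`. -/
def pathAdj {n : ℕ} (i j : Fin n) : Prop := i.val + 1 = j.val ∨ j.val + 1 = i.val

/-- `σ` is reachable from the identity endowment via rational swaps. -/
def ReachableAssign {n : ℕ} (adj : Fin n → Fin n → Prop) (u : Fin n → Fin n → ℕ)
    (σ : Assignment n) : Prop :=
  ∃ t σseq, σseq 0 = 1 ∧ SwapSeq adj u σseq t ∧ σseq t = σ

namespace SwapAux

variable {N : ℕ}

lemma inv_mul_swap (σ : Assignment N) (a b x : Fin N) :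
    (σ * Equiv.swap a b)⁻¹ x = Equiv.swap a b (σ⁻¹ x) := by
  rw [mul_inv_rev]
  simp [Equiv.Perm.mul_apply]

lemma swapStep_norm {u : Fin N → Fin N → ℕ} {σ σ' : Assignment N}
    (h : SwapStep pathAdj u σ σ') :
    ∃ a b : Fin N, a.val + 1 = b.val ∧ u a (σ b) > u a (σ a) ∧ u b (σ a) > u b (σ b) ∧
      σ' = σ * Equiv.swap a b := by
  obtain ⟨a, b, hadj, h1, h2, he⟩ := h
  rcases hadj with hab | hba
  · exact ⟨a, b, hab, h1, h2, he⟩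
  · exact ⟨b, a, hba, h2, h1, by rw [he, Equiv.swap_comm]⟩

lemma swapSeq_extend {adj : Fin N → Fin N → Prop} {u : Fin N → Fin N → ℕ}
    {τ : ℕ → Assignment N} {T : ℕ} (hs : SwapSeq adj u τ T) {ρ : Assignment N}
    (hstep : SwapStep adj u (τ T) ρ) :
    ∃ τ' : ℕ → Assignment N, (∀ s, s ≤ T → τ' s = τ s) ∧ SwapSeq adj u τ' (T + 1) ∧
      τ' (T + 1) = ρ := by
  refine ⟨fun s => if s ≤ T then τ s else ρ, fun s hs' => by simp [hs'], ?_, by simp⟩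
  intro m hm
  by_cases hmT : m < T
  · have h1 : m ≤ T := hmT.le
    have h2 : m + 1 ≤ T := hmT
    simpa [h1, h2] using hs m hmT
  · have hmeq : m = T := by omega
    subst hmeq
    have h2 : ¬ (m + 1 ≤ m) := by omega
    simpa [h2] using hstep

lemma util_step {adj : Fin N → Fin N → Prop} {u : Fin N → Fin N → ℕ} {σ σ' : Assignment N}
    (h : SwapStep adj u σ σ') (c : Fin N) : u c (σ c) ≤ u c (σ' c) := by
  obtain ⟨a, b, _, h1, h2, he⟩ := h
  subst he
  by_cases hca : c = a
  · subst hca; rw [Equiv.Perm.mul_apply, Equiv.swap_apply_left]; exact le_of_lt h1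
  by_cases hcb : c = b
  · subst hcb; rw [Equiv.Perm.mul_apply, Equiv.swap_apply_right]; exact le_of_lt h2
  · rw [Equiv.Perm.mul_apply, Equiv.swap_apply_of_ne_of_ne hca hcb]

lemma util_mono {adj : Fin N → Fin N → Prop} {u : Fin N → Fin N → ℕ}
    {σseq : ℕ → Assignment N} {t : ℕ}
    (hseq : SwapSeq adj u σseq t) (c : Fin N) {m m' : ℕ} (h : m ≤ m') (h' : m' ≤ t) :
    u c (σseq m c) ≤ u c (σseq m' c) := by
  induction m', h using Nat.le_induction with
  | base => exact le_rfl
  | succ m' hm ih =>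
    exact le_trans (ih (by omega)) (util_step (hseq m' (by omega)) c)

lemma no_revisit {adj : Fin N → Fin N → Prop} {u : Fin N → Fin N → ℕ} (hu : StrictPref u)
    {σseq : ℕ → Assignment N} {t : ℕ} (hseq : SwapSeq adj u σseq t) (c : Fin N)
    {m1 m2 m3 : ℕ} (h12 : m1 ≤ m2) (h23 : m2 ≤ m3) (h3 : m3 ≤ t)
    (he : σseq m3 c = σseq m1 c) : σseq m2 c = σseq m1 c := by
  have h1 := util_mono hseq c h12 (le_trans h23 h3)
  have h2 := util_mono hseq c h23 h3
  rw [he] at h2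
  exact hu c (le_antisymm h2 h1)

lemma pos_no_revisit {adj : Fin N → Fin N → Prop} {u : Fin N → Fin N → ℕ} (hu : StrictPref u)
    {σseq : ℕ → Assignment N} {t : ℕ} (hseq : SwapSeq adj u σseq t) (o : Fin N)
    {m1 m2 m3 : ℕ} (h12 : m1 ≤ m2) (h23 : m2 ≤ m3) (h3 : m3 ≤ t)
    (he : (σseq m3)⁻¹ o = (σseq m1)⁻¹ o) : (σseq m2)⁻¹ o = (σseq m1)⁻¹ o := by
  have h1 : σseq m1 ((σseq m1)⁻¹ o) = o := Equiv.apply_symm_apply _ _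
  have h3' : σseq m3 ((σseq m1)⁻¹ o) = o := by rw [← he]; exact Equiv.apply_symm_apply _ _
  have h2 := no_revisit hu hseq _ h12 h23 h3 (h3'.trans h1.symm)
  rw [h1] at h2
  rw [Equiv.Perm.inv_eq_iff_eq]
  exact h2.symm

lemma swap_val_le {a b x : Fin N} (h : a.val + 1 = b.val) :
    (Equiv.swap a b x).val ≤ x.val + 1 ∧ x.val ≤ (Equiv.swap a b x).val + 1 := by
  by_cases hx : x = a
  · subst hx; rw [Equiv.swap_apply_left]; omega
  by_cases hx' : x = b
  · subst hx'; rw [Equiv.swap_apply_right]; omega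
  · rw [Equiv.swap_apply_of_ne_of_ne hx hx']; omega

lemma nat_ivt_aux {f : ℕ → ℕ} :
    ∀ (d a : ℕ), (∀ m, a ≤ m → m < a + d → (f (m + 1) ≤ f m + 1 ∧ f m ≤ f (m + 1) + 1)) →
      ∀ v, (f a ≤ v ∧ v ≤ f (a + d)) ∨ (f (a + d) ≤ v ∧ v ≤ f a) →
      ∃ s, a ≤ s ∧ s ≤ a + d ∧ f s = v := by
  intro d
  induction d with
  | zero =>
    intro a _ v hv
    simp only [Nat.add_zero] at hv
    exact ⟨a, le_rfl, by omega, by omega⟩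
  | succ d ih =>
    intro a hstep v hv
    by_cases hfa : f a = v
    · exact ⟨a, le_rfl, by omega, hfa⟩
    · obtain ⟨hs1, hs2⟩ := hstep a le_rfl (by omega)
      have heq : a + 1 + d = a + (d + 1) := by omega
      have hrec : (f (a + 1) ≤ v ∧ v ≤ f (a + 1 + d)) ∨
          (f (a + 1 + d) ≤ v ∧ v ≤ f (a + 1)) := by
        rw [heq]
        rcases hv with ⟨h1, h2⟩ | ⟨h1, h2⟩
        · left; exact ⟨by omega, h2⟩
        · right; exact ⟨h1, by omega⟩
      obtain ⟨s, hsa, hsb, hsv⟩ :=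
        ih (a + 1) (fun m hm hm' => hstep m (by omega) (by omega)) v hrec
      exact ⟨s, by omega, by omega, hsv⟩

lemma nat_ivt {f : ℕ → ℕ} {a b v : ℕ} (hab : a ≤ b)
    (hstep : ∀ m, a ≤ m → m < b → (f (m + 1) ≤ f m + 1 ∧ f m ≤ f (m + 1) + 1))
    (hv : (f a ≤ v ∧ v ≤ f b) ∨ (f b ≤ v ∧ v ≤ f a)) :
    ∃ s, a ≤ s ∧ s ≤ b ∧ f s = v := by
  obtain ⟨d, rfl⟩ : ∃ d, b = a + d := ⟨b - a, by omega⟩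
  exact nat_ivt_aux d a hstep v hv

lemma sim {n n' : ℕ} (hn'n : n' ≤ n)
    (u : Fin n → Fin n → ℕ) (σseq : ℕ → Assignment n) (t : ℕ)
    (h0 : σseq 0 = 1) (hseq : SwapSeq pathAdj u σseq t)
    (oN : Fin n) (hoN : oN.val = n' - 1) (hn'pos : 0 < n')
    (hanti : ∀ m m', m ≤ m' → m' ≤ t →
      ((σseq m')⁻¹ oN).val ≤ ((σseq m)⁻¹ oN).val) :
    ∀ m, m ≤ t → ∃ (T' : ℕ) (τ : ℕ → Assignment n'), τ 0 = 1 ∧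
      SwapSeq pathAdj (fun i j => u (Fin.castLE hn'n i) (Fin.castLE hn'n j)) τ T' ∧
      ∀ i : Fin n', i.val ≤ ((σseq m)⁻¹ oN).val →
        ((τ T') i).val = (σseq m (Fin.castLE hn'n i)).val := by
  intro m
  induction m with
  | zero =>
    intro _
    refine ⟨0, fun _ => 1, rfl, fun s hs => absurd hs (Nat.not_lt_zero s), ?_⟩
    intro i _
    simp [h0]
  | succ m ih =>
    intro hm1
    obtain ⟨T', τ, hτ0, hτseq, hzone⟩ := ih (by omega)
    obtain ⟨a, b, hab, hua, hub, he⟩ := swapStep_norm (hseq m (by omega))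
    have hq1 : ((σseq (m+1))⁻¹ oN).val ≤ ((σseq m)⁻¹ oN).val :=
      hanti m (m+1) (by omega) hm1
    have hposstep : (σseq (m+1))⁻¹ oN = Equiv.swap a b ((σseq m)⁻¹ oN) := by
      rw [he]; exact inv_mul_swap _ _ _ _
    have hqub : ((σseq m)⁻¹ oN).val ≤ n' - 1 := by
      have h2 := hanti 0 m (by omega) (by omega)
      rw [h0] at h2
      simpa [hoN] using h2
    rcases Nat.lt_trichotomy a.val ((σseq m)⁻¹ oN).val with hlt | heq | hgt
    · -- kept swap: both agents inside the zone (or at its boundary)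
      have hbval : b.val ≤ ((σseq m)⁻¹ oN).val := by omega
      have han' : a.val < n' := by omega
      have hbn' : b.val < n' := by omega
      have hca : Fin.castLE hn'n ⟨a.val, han'⟩ = a := by apply Fin.ext; simp
      have hcb : Fin.castLE hn'n ⟨b.val, hbn'⟩ = b := by apply Fin.ext; simp
      have hobja : Fin.castLE hn'n (τ T' ⟨a.val, han'⟩) = σseq m a := by
        apply Fin.ext
        have h3 := hzone ⟨a.val, han'⟩ (by simpa using le_of_lt hlt)
        rw [hca] at h3
        simpa using h3
      have hobjb : Fin.castLE hn'n (τ T' ⟨b.val, hbn'⟩) = σseq m b := by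
        apply Fin.ext
        have h3 := hzone ⟨b.val, hbn'⟩ (by simpa using hbval)
        rw [hcb] at h3
        simpa using h3
      have hstep' : SwapStep pathAdj (fun i j => u (Fin.castLE hn'n i) (Fin.castLE hn'n j))
          (τ T') (τ T' * Equiv.swap ⟨a.val, han'⟩ ⟨b.val, hbn'⟩) := by
        refine ⟨⟨a.val, han'⟩, ⟨b.val, hbn'⟩, Or.inl (by simpa using hab), ?_, ?_, rfl⟩
        · show u (Fin.castLE hn'n ⟨a.val, han'⟩) (Fin.castLE hn'n (τ T' ⟨b.val, hbn'⟩)) >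
              u (Fin.castLE hn'n ⟨a.val, han'⟩) (Fin.castLE hn'n (τ T' ⟨a.val, han'⟩))
          rw [hca, hobja, hobjb]; exact hua
        · show u (Fin.castLE hn'n ⟨b.val, hbn'⟩) (Fin.castLE hn'n (τ T' ⟨a.val, han'⟩)) >
              u (Fin.castLE hn'n ⟨b.val, hbn'⟩) (Fin.castLE hn'n (τ T' ⟨b.val, hbn'⟩))
          rw [hcb, hobja, hobjb]; exact hub
      obtain ⟨τ2, hτ2old, hτ2seq, hτ2end⟩ := swapSeq_extend hτseq hstep'
      refine ⟨T' + 1, τ2, by rw [hτ2old 0 (by omega)]; exact hτ0, hτ2seq, ?_⟩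
      intro i hi
      rw [hτ2end, Equiv.Perm.mul_apply]
      have hswapcast := (Fin.castLE_injective hn'n).swap_apply
        (⟨a.val, han'⟩ : Fin n') ⟨b.val, hbn'⟩ i
      rw [hca, hcb] at hswapcast
      have hmain : σseq (m+1) (Fin.castLE hn'n i)
          = σseq m (Fin.castLE hn'n (Equiv.swap ⟨a.val, han'⟩ ⟨b.val, hbn'⟩ i)) := by
        rw [he, Equiv.Perm.mul_apply, hswapcast]
      rw [hmain]
      apply hzone
      by_cases h1 : i = ⟨a.val, han'⟩
      · rw [h1, Equiv.swap_apply_left]; simpa using hbval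
      by_cases h2 : i = ⟨b.val, hbn'⟩
      · rw [h2, Equiv.swap_apply_right]; simpa using le_of_lt hlt
      · rw [Equiv.swap_apply_of_ne_of_ne h1 h2]; exact le_trans hi hq1
    · -- the object o_{n'} would move right: impossible
      exfalso
      have hpa : (σseq m)⁻¹ oN = a := Fin.ext heq.symm
      have h3 : ((σseq (m+1))⁻¹ oN).val = b.val := by
        rw [hposstep, hpa, Equiv.swap_apply_left]
      omega
    · -- dropped swap: entirely to the right of the zone
      refine ⟨T', τ, hτ0, hτseq, ?_⟩
      intro i hi
      have hi' : i.val ≤ ((σseq m)⁻¹ oN).val := le_trans hi hq1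
      have hne1 : Fin.castLE hn'n i ≠ a := by
        intro hcon
        have h3 := congrArg Fin.val hcon
        simp at h3
        omega
      have hne2 : Fin.castLE hn'n i ≠ b := by
        intro hcon
        have h3 := congrArg Fin.val hcon
        simp at h3
        omega
      have hmain : σseq (m+1) (Fin.castLE hn'n i) = σseq m (Fin.castLE hn'n i) := by
        rw [he, Equiv.Perm.mul_apply, Equiv.swap_apply_of_ne_of_ne hne1 hne2]
      rw [hmain]
      exact hzone i hi'

def lowEquiv {n n' : ℕ} (h : n' ≤ n) : Fin n' ≃ {i : Fin n // i.val < n'} where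
  toFun i := ⟨Fin.castLE h i, by simpa using i.isLt⟩
  invFun j := ⟨j.1.val, j.2⟩
  left_inv i := by apply Fin.ext; simp
  right_inv j := by apply Subtype.ext; apply Fin.ext; simp

lemma lowEquiv_coe {n n' : ℕ} (h : n' ≤ n) (i : Fin n') :
    ((lowEquiv h i : {j : Fin n // j.val < n'}) : Fin n) = Fin.castLE h i := rfl

lemma extendDomain_swap {n n' : ℕ} (h : n' ≤ n) (a b : Fin n') :
    (Equiv.swap a b).extendDomain (lowEquiv h)
      = Equiv.swap (Fin.castLE h a) (Fin.castLE h b) := by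
  ext x
  by_cases hx : x.val < n'
  · have hx2 : x = Fin.castLE h ⟨x.val, hx⟩ := by apply Fin.ext; simp
    have e1 : (Equiv.swap a b).extendDomain (lowEquiv h) x
        = Fin.castLE h (Equiv.swap a b ⟨x.val, hx⟩) := by
      conv_lhs => rw [hx2, ← lowEquiv_coe h ⟨x.val, hx⟩]
      rw [Equiv.Perm.extendDomain_apply_image, lowEquiv_coe]
    have e2 : Equiv.swap (Fin.castLE h a) (Fin.castLE h b) x
        = Fin.castLE h (Equiv.swap a b ⟨x.val, hx⟩) := by
      conv_lhs => rw [hx2]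
      exact (Fin.castLE_injective h).swap_apply a b ⟨x.val, hx⟩
    rw [e1, e2]
  · have h1 : x ≠ Fin.castLE h a := fun hcon => hx (by rw [hcon]; simpa using a.isLt)
    have h2 : x ≠ Fin.castLE h b := fun hcon => hx (by rw [hcon]; simpa using b.isLt)
    rw [Equiv.Perm.extendDomain_apply_not_subtype _ (lowEquiv h) hx,
      Equiv.swap_apply_of_ne_of_ne h1 h2]

end SwapAux

/-- 0-indexed: object `o_1` is index `0`, object `o_{n'}` is index `n'-1`, agent
`k : ℕ` with `1 ≤ k < n'`: on a path under strict preferences, there is a reachable assignment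
`σ` with `σ(k) = o_1` and `σ(k-1) = o_{n'}` in the full instance on agents `0,…,n-1` iff there
is such a reachable assignment in the instance restricted to agents `0,…,n'-1` and objects
`o_0,…,o_{n'-1}` (induced subpath, restricted preferences). -/
theorem constrained_reachable_iff_truncated {n n' : ℕ}
    (u : Fin n → Fin n → ℕ) (hu : StrictPref u)
    (k : ℕ) (hk1 : 1 ≤ k) (hkn' : k < n') (hn'n : n' ≤ n) :
    (∃ σ : Assignment n, ReachableAssign pathAdj u σ ∧
        σ ⟨k, by omega⟩ = ⟨0, by omega⟩ ∧ σ ⟨k - 1, by omega⟩ = ⟨n' - 1, by omega⟩) ↔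
    (∃ σ' : Assignment n', ReachableAssign pathAdj
          (fun i j => u (Fin.castLE hn'n i) (Fin.castLE hn'n j)) σ' ∧
        σ' ⟨k, hkn'⟩ = ⟨0, by omega⟩ ∧ σ' ⟨k - 1, by omega⟩ = ⟨n' - 1, by omega⟩) := by
  constructor
  · -- full ⇒ truncated
    rintro ⟨σ, ⟨t, σseq, h0, hseq, hT⟩, hc1, hc2⟩
    have hn2 : 2 ≤ n' := by omega
    have hN' : n' - 1 < n := by omega
    have h0n : 0 < n := by omega
    set oN : Fin n := ⟨n' - 1, hN'⟩ with hoN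
    set o0 : Fin n := ⟨0, h0n⟩ with ho0
    have hqt : ((σseq t)⁻¹ oN).val = k - 1 := by
      have h1 : (σseq t)⁻¹ oN = ⟨k - 1, by omega⟩ := by
        rw [hT, Equiv.Perm.inv_eq_iff_eq]
        exact hc2.symm
      rw [h1]
    have hrt : ((σseq t)⁻¹ o0).val = k := by
      have h1 : (σseq t)⁻¹ o0 = ⟨k, by omega⟩ := by
        rw [hT, Equiv.Perm.inv_eq_iff_eq]
        exact hc1.symm
      rw [h1]
    have hq0 : ((σseq 0)⁻¹ oN).val = n' - 1 := by rw [h0]; simp [hoN]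
    have hr0 : ((σseq 0)⁻¹ o0).val = 0 := by rw [h0]; simp [ho0]
    have hsteps : ∀ (o : Fin n) (j : ℕ), j < t →
        (((σseq (j+1))⁻¹ o).val ≤ ((σseq j)⁻¹ o).val + 1 ∧
          ((σseq j)⁻¹ o).val ≤ ((σseq (j+1))⁻¹ o).val + 1) := by
      intro o j hj
      obtain ⟨a, b, hab, _, _, he⟩ := SwapAux.swapStep_norm (hseq j hj)
      rw [he, SwapAux.inv_mul_swap]
      exact SwapAux.swap_val_le hab
    have ivtq : ∀ (o : Fin n) (a b : ℕ), a ≤ b → b ≤ t → ∀ v : ℕ,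
        ((((σseq a)⁻¹ o).val ≤ v ∧ v ≤ ((σseq b)⁻¹ o).val) ∨
          (((σseq b)⁻¹ o).val ≤ v ∧ v ≤ ((σseq a)⁻¹ o).val)) →
        ∃ s, a ≤ s ∧ s ≤ b ∧ ((σseq s)⁻¹ o).val = v := by
      intro o a b hab hbt v hv
      exact SwapAux.nat_ivt (f := fun j => ((σseq j)⁻¹ o).val) hab
        (fun j hj hj' => hsteps o j (by omega)) hv
    have hdist : ∀ m : ℕ, ((σseq m)⁻¹ oN).val ≠ ((σseq m)⁻¹ o0).val := by
      intro m hcon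
      have h1 : (σseq m)⁻¹ oN = (σseq m)⁻¹ o0 := Fin.ext hcon
      have h2 : oN = o0 := (Equiv.injective _) h1
      have h3 : (n' - 1 : ℕ) = 0 := by simpa [hoN, ho0] using congrArg Fin.val h2
      omega
    have hqlb : ∀ m, m ≤ t → k - 1 ≤ ((σseq m)⁻¹ oN).val := by
      intro m hm
      by_contra hcon
      push_neg at hcon
      obtain ⟨s, hs0, hsm, hsv⟩ := ivtq oN 0 m (by omega) hm (k - 1)
        (Or.inr ⟨by omega, by omega⟩)
      have he : (σseq t)⁻¹ oN = (σseq s)⁻¹ oN := Fin.ext (by omega)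
      have h2 := SwapAux.pos_no_revisit hu hseq oN hsm hm le_rfl he
      have h3 := congrArg Fin.val h2
      omega
    have hanti : ∀ m m', m ≤ m' → m' ≤ t →
        ((σseq m')⁻¹ oN).val ≤ ((σseq m)⁻¹ oN).val := by
      intro m m' hmm' hm't
      by_contra hcon
      push_neg at hcon
      have h1 : k - 1 ≤ ((σseq m)⁻¹ oN).val := hqlb m (by omega)
      obtain ⟨s, hs1, hs2, hsv⟩ := ivtq oN m' t hm't le_rfl (((σseq m)⁻¹ oN).val)
        (Or.inr ⟨by omega, by omega⟩)
      have he : (σseq s)⁻¹ oN = (σseq m)⁻¹ oN := Fin.ext hsv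
      have h2 := SwapAux.pos_no_revisit hu hseq oN hmm' hs1 hs2 he
      have h3 := congrArg Fin.val h2
      omega
    have hrub : ∀ m, m ≤ t → ((σseq m)⁻¹ o0).val ≤ k := by
      intro m hm
      by_contra hcon
      push_neg at hcon
      obtain ⟨s, hs0, hsm, hsv⟩ := ivtq o0 0 m (by omega) hm k
        (Or.inl ⟨by omega, by omega⟩)
      have he : (σseq t)⁻¹ o0 = (σseq s)⁻¹ o0 := Fin.ext (by omega)
      have h2 := SwapAux.pos_no_revisit hu hseq o0 hsm hm le_rfl he
      have h3 := congrArg Fin.val h2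
      omega
    have hex : ∃ m, m ≤ t ∧ ((σseq m)⁻¹ oN).val = k - 1 := ⟨t, le_rfl, hqt⟩
    obtain ⟨hm0t, hqm0⟩ := Nat.find_spec hex
    have hm0pos : 0 < Nat.find hex := by
      rcases Nat.eq_zero_or_pos (Nat.find hex) with h | h
      · exfalso
        have h1 := hqm0
        rw [h] at h1
        omega
      · exact h
    set m0 := Nat.find hex with hm0def
    have hqconst : ∀ s, m0 ≤ s → s ≤ t → ((σseq s)⁻¹ oN).val = k - 1 := by
      intro s h1 h2
      have h3 := hanti m0 s h1 h2
      have h4 := hqlb s h2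
      omega
    have hm1t : m0 - 1 < t := by omega
    obtain ⟨a, b, hab, hua, hub, he⟩ := SwapAux.swapStep_norm (hseq (m0 - 1) hm1t)
    have hm1m0 : m0 - 1 + 1 = m0 := by omega
    have hq_m1_ne : ((σseq (m0 - 1))⁻¹ oN).val ≠ k - 1 := by
      intro hcon
      exact Nat.find_min hex (show m0 - 1 < Nat.find hex by omega) ⟨by omega, hcon⟩
    have hposq : (σseq m0)⁻¹ oN = Equiv.swap a b ((σseq (m0 - 1))⁻¹ oN) := by
      have h1 : (σseq (m0 - 1 + 1))⁻¹ oN = Equiv.swap a b ((σseq (m0 - 1))⁻¹ oN) := by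
        rw [he, SwapAux.inv_mul_swap]
      rw [hm1m0] at h1
      exact h1
    have hswapb := SwapAux.swap_val_le (x := (σseq (m0 - 1))⁻¹ oN) hab
    have hqm1 : ((σseq (m0 - 1))⁻¹ oN).val = k := by
      have h3 := congrArg Fin.val hposq
      have h4 := hqlb (m0 - 1) (by omega)
      omega
    have hposoN : (σseq (m0 - 1))⁻¹ oN = b := by
      by_cases h1 : (σseq (m0 - 1))⁻¹ oN = a
      · exfalso
        have h2 := congrArg Fin.val h1
        rw [h1, Equiv.swap_apply_left] at hposq
        have h3 := congrArg Fin.val hposq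
        omega
      by_cases h2 : (σseq (m0 - 1))⁻¹ oN = b
      · exact h2
      · exfalso
        rw [Equiv.swap_apply_of_ne_of_ne h1 h2] at hposq
        have h3 := congrArg Fin.val hposq
        omega
    have hbval : b.val = k := by
      have h3 := congrArg Fin.val hposoN
      omega
    have haval : a.val = k - 1 := by omega
    have hposr : (σseq m0)⁻¹ o0 = Equiv.swap a b ((σseq (m0 - 1))⁻¹ o0) := by
      have h1 : (σseq (m0 - 1 + 1))⁻¹ o0 = Equiv.swap a b ((σseq (m0 - 1))⁻¹ o0) := by
        rw [he, SwapAux.inv_mul_swap]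
      rw [hm1m0] at h1
      exact h1
    have hrm0 : ((σseq m0)⁻¹ o0).val = k := by
      have h1 : ((σseq m0)⁻¹ o0).val ≤ k := hrub m0 hm0t
      have h2 : ((σseq m0)⁻¹ o0).val ≠ k - 1 := fun hcon => hdist m0 (by omega)
      by_contra hcon
      obtain ⟨s, hs1, hs2, hsv⟩ := ivtq o0 m0 t hm0t le_rfl (k - 1)
        (Or.inl ⟨by omega, by omega⟩)
      have h4 := hqconst s hs1 hs2
      exact hdist s (by omega)
    have hposo0 : (σseq (m0 - 1))⁻¹ o0 = a := by
      have h1 : (σseq m0)⁻¹ o0 = b := Fin.ext (by omega)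
      rw [h1] at hposr
      have h2 := congrArg (Equiv.swap a b) hposr
      rw [Equiv.swap_apply_self, Equiv.swap_apply_right] at h2
      exact h2.symm
    have hσa : σseq (m0 - 1) a = o0 := by
      rw [← hposo0]; exact Equiv.apply_symm_apply _ _
    have hσb : σseq (m0 - 1) b = oN := by
      rw [← hposoN]; exact Equiv.apply_symm_apply _ _
    obtain ⟨T', τ, hτ0, hτseq, hzone⟩ := SwapAux.sim hn'n u σseq t h0 hseq oN
      (by simp [hoN]) (by omega) hanti (m0 - 1) (by omega)
    have hkn'2 : k - 1 < n' := by omega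
    have hca : Fin.castLE hn'n ⟨k - 1, hkn'2⟩ = a := by apply Fin.ext; simp [haval]
    have hcb : Fin.castLE hn'n ⟨k, hkn'⟩ = b := by apply Fin.ext; simp [hbval]
    have hτa : (τ T' ⟨k - 1, hkn'2⟩).val = 0 := by
      have h3 := hzone ⟨k - 1, hkn'2⟩
        (show k - 1 ≤ ((σseq (m0 - 1))⁻¹ oN).val by omega)
      rw [hca, hσa] at h3
      simpa [ho0] using h3
    have hτb : (τ T' ⟨k, hkn'⟩).val = n' - 1 := by
      have h3 := hzone ⟨k, hkn'⟩
        (show k ≤ ((σseq (m0 - 1))⁻¹ oN).val by omega)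
      rw [hcb, hσb] at h3
      simpa [hoN] using h3
    have e1 : Fin.castLE hn'n (τ T' ⟨k, hkn'⟩) = σseq (m0 - 1) b := by
      apply Fin.ext
      rw [hσb]
      simp [hτb, hoN]
    have e2 : Fin.castLE hn'n (τ T' ⟨k - 1, hkn'2⟩) = σseq (m0 - 1) a := by
      apply Fin.ext
      rw [hσa]
      simp [hτa, ho0]
    have hstepfin : SwapStep pathAdj (fun i j => u (Fin.castLE hn'n i) (Fin.castLE hn'n j))
        (τ T') (τ T' * Equiv.swap ⟨k - 1, hkn'2⟩ ⟨k, hkn'⟩) := by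
      refine ⟨⟨k - 1, hkn'2⟩, ⟨k, hkn'⟩, Or.inl (show k - 1 + 1 = k by omega), ?_, ?_, rfl⟩
      · show u (Fin.castLE hn'n ⟨k - 1, hkn'2⟩) (Fin.castLE hn'n (τ T' ⟨k, hkn'⟩)) >
            u (Fin.castLE hn'n ⟨k - 1, hkn'2⟩) (Fin.castLE hn'n (τ T' ⟨k - 1, hkn'2⟩))
        rw [hca, e1, e2]
        exact hua
      · show u (Fin.castLE hn'n ⟨k, hkn'⟩) (Fin.castLE hn'n (τ T' ⟨k - 1, hkn'2⟩)) >
            u (Fin.castLE hn'n ⟨k, hkn'⟩) (Fin.castLE hn'n (τ T' ⟨k, hkn'⟩))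
        rw [hcb, e1, e2]
        exact hub
    obtain ⟨τ2, hold, hseq2, hend⟩ := SwapAux.swapSeq_extend hτseq hstepfin
    refine ⟨τ T' * Equiv.swap ⟨k - 1, hkn'2⟩ ⟨k, hkn'⟩,
      ⟨T' + 1, τ2, by rw [hold 0 (by omega)]; exact hτ0, hseq2, hend⟩, ?_, ?_⟩
    · apply Fin.ext
      rw [Equiv.Perm.mul_apply, Equiv.swap_apply_right]
      simpa using hτa
    · show (τ T' * Equiv.swap (⟨k - 1, hkn'2⟩ : Fin n') (⟨k, hkn'⟩ : Fin n')) ⟨k - 1, hkn'2⟩ = (⟨n' - 1, by omega⟩ : Fin n')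
      apply Fin.ext
      rw [Equiv.Perm.mul_apply, Equiv.swap_apply_left]
      simpa using hτb
  · -- truncated ⇒ full
    rintro ⟨σ', ⟨t, τ, hτ0, hτseq, hτt⟩, hc1, hc2⟩
    have hea : ∀ (ρ : Assignment n') (c : Fin n'),
        ρ.extendDomain (SwapAux.lowEquiv hn'n) (Fin.castLE hn'n c)
          = Fin.castLE hn'n (ρ c) := by
      intro ρ c
      rw [← SwapAux.lowEquiv_coe hn'n c, Equiv.Perm.extendDomain_apply_image,
        SwapAux.lowEquiv_coe]
    refine ⟨σ'.extendDomain (SwapAux.lowEquiv hn'n),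
      ⟨t, fun s => (τ s).extendDomain (SwapAux.lowEquiv hn'n),
        by show (τ 0).extendDomain _ = 1; rw [hτ0]; exact Equiv.Perm.extendDomain_one _,
        ?_,
        by show (τ t).extendDomain _ = _; rw [hτt]⟩, ?_, ?_⟩
    · intro m hm
      obtain ⟨a, b, hadj, h1, h2, he⟩ := hτseq m hm
      refine ⟨Fin.castLE hn'n a, Fin.castLE hn'n b, ?_, ?_, ?_, ?_⟩
      · rcases hadj with h | h
        · left; simpa using h
        · right; simpa using h
      · show u (Fin.castLE hn'n a)
            ((τ m).extendDomain (SwapAux.lowEquiv hn'n) (Fin.castLE hn'n b)) >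
          u (Fin.castLE hn'n a)
            ((τ m).extendDomain (SwapAux.lowEquiv hn'n) (Fin.castLE hn'n a))
        rw [hea, hea]
        exact h1
      · show u (Fin.castLE hn'n b)
            ((τ m).extendDomain (SwapAux.lowEquiv hn'n) (Fin.castLE hn'n a)) >
          u (Fin.castLE hn'n b)
            ((τ m).extendDomain (SwapAux.lowEquiv hn'n) (Fin.castLE hn'n b))
        rw [hea, hea]
        exact h2
      · show (τ (m + 1)).extendDomain (SwapAux.lowEquiv hn'n)
          = (τ m).extendDomain (SwapAux.lowEquiv hn'n)
            * Equiv.swap (Fin.castLE hn'n a) (Fin.castLE hn'n b)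
        rw [he, ← Equiv.Perm.extendDomain_mul, SwapAux.extendDomain_swap]
    · have hk' : (⟨k, by omega⟩ : Fin n) = Fin.castLE hn'n ⟨k, hkn'⟩ := by
        apply Fin.ext; simp
      rw [hk', hea, hc1]
      apply Fin.ext; simp
    · have hk' : (⟨k - 1, by omega⟩ : Fin n) = Fin.castLE hn'n ⟨k - 1, by omega⟩ := by
        apply Fin.ext; simp
      rw [hk', hea]
      apply Fin.ext
      simpa using congrArg Fin.val hc2
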